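/- For any integer-valued quasi-polynomials f_1, ..., f_s, there exist integer-valued quasi-polynomials d, u_1, ..., u_s such that d is a greatest common divisor of f_1, ..., f_s (d divides each f_k pointwise, and every common pointwise divisor in R divides d) and f_1·u_1 + f_2·u_2 + ... + f_s·u_s = d as functions on ℕ. -/

import Mathlib

/-- A function `f : ℕ → ℤ` is an integer-valued quasi-polynomial if there exist a positive
integer `T` and polynomials `f₀, …, f_{T-1} ∈ ℤ[x]` with `f (T*m + i) = fᵢ(m)`. -/
def IsQuasiPoly (f : ℕ → ℤ) : Prop :=
  ∃ T : ℕ, 0 < T ∧ ∃ p : ℕ → Polynomial ℤ,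
    ∀ m i : ℕ, i < T → f (T * m + i) = (p i).eval (m : ℤ)

open Polynomial

lemma qp_eval (P : ℤ[X]) : IsQuasiPoly (fun n => P.eval (n : ℤ)) := by
  refine ⟨1, one_pos, fun _ => P, fun m i hi => ?_⟩
  interval_cases i
  simp

lemma qp_const (a : ℤ) : IsQuasiPoly (fun _ => a) := by
  exact ⟨1, one_pos, fun _ => C a, fun m i hi => by simp⟩

lemma period_mul {f : ℕ → ℤ} {T : ℕ} (hT : 0 < T) (p : ℕ → ℤ[X])
    (hp : ∀ m i : ℕ, i < T → f (T * m + i) = (p i).eval (m : ℤ)) (k : ℕ) (hk : 0 < k) :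
    ∀ m i : ℕ, i < k * T →
      f (k * T * m + i) = ((p (i % T)).comp (C (k : ℤ) * X + C ((i / T : ℕ) : ℤ))).eval (m : ℤ) := by
  intro m i hi
  have h1 : k * T * m + i = T * (k * m + i / T) + i % T := by
    have h2 := Nat.div_add_mod i T
    have : T * (k * m + i / T) + i % T = T * (k * m) + (T * (i / T) + i % T) := by ring
    rw [this, h2]; ring
  rw [h1, hp _ _ (Nat.mod_lt _ hT), eval_comp]
  have : ((k * m + i / T : ℕ) : ℤ) = eval (m : ℤ) (C (k : ℤ) * X + C ((i / T : ℕ) : ℤ)) := by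
    simp
  rw [this]

lemma IsQuasiPoly.mul {f g : ℕ → ℤ} (hf : IsQuasiPoly f) (hg : IsQuasiPoly g) :
    IsQuasiPoly (fun n => f n * g n) := by
  obtain ⟨T1, hT1, p1, hp1⟩ := hf
  obtain ⟨T2, hT2, p2, hp2⟩ := hg
  have h1 := period_mul hT1 p1 hp1 T2 hT2
  have h2 := period_mul hT2 p2 hp2 T1 hT1
  refine ⟨T2 * T1, Nat.mul_pos hT2 hT1, fun i =>
    ((p1 (i % T1)).comp (C (T2 : ℤ) * X + C ((i / T1 : ℕ) : ℤ))) *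
    ((p2 (i % T2)).comp (C (T1 : ℤ) * X + C ((i / T2 : ℕ) : ℤ))), fun m i hi => ?_⟩
  rw [eval_mul, ← h1 m i hi, ← h2 m i (by rwa [Nat.mul_comm])]
  rw [Nat.mul_comm T2 T1]

lemma IsQuasiPoly.add {f g : ℕ → ℤ} (hf : IsQuasiPoly f) (hg : IsQuasiPoly g) :
    IsQuasiPoly (fun n => f n + g n) := by
  obtain ⟨T1, hT1, p1, hp1⟩ := hf
  obtain ⟨T2, hT2, p2, hp2⟩ := hg
  have h1 := period_mul hT1 p1 hp1 T2 hT2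
  have h2 := period_mul hT2 p2 hp2 T1 hT1
  refine ⟨T2 * T1, Nat.mul_pos hT2 hT1, fun i =>
    ((p1 (i % T1)).comp (C (T2 : ℤ) * X + C ((i / T1 : ℕ) : ℤ))) +
    ((p2 (i % T2)).comp (C (T1 : ℤ) * X + C ((i / T2 : ℕ) : ℤ))), fun m i hi => ?_⟩
  rw [eval_add, ← h1 m i hi, ← h2 m i (by rwa [Nat.mul_comm])]
  rw [Nat.mul_comm T2 T1]

lemma qp_glue (T : ℕ) (hT : 0 < T) (g : ℕ → ℕ → ℤ) (hg : ∀ i, IsQuasiPoly (g i)) :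
    IsQuasiPoly (fun n => g (n % T) (n / T)) := by
  choose S hS p hp using hg
  set S0 : ℕ := ∏ i ∈ Finset.range T, S i with hS0
  have hS0pos : 0 < S0 := Finset.prod_pos (fun i _ => hS i)
  have key : ∀ i, i < T → ∀ m j : ℕ, j < S0 →
      g i (S0 * m + j) =
      ((p i (j % S i)).comp (C ((S0 / S i : ℕ) : ℤ) * X + C ((j / S i : ℕ) : ℤ))).eval (m : ℤ) := by
    intro i hi m j hj
    have hdvd : S i ∣ S0 := Finset.dvd_prod_of_mem S (Finset.mem_range.mpr hi)
    have hk : 0 < S0 / S i := Nat.div_pos (Nat.le_of_dvd hS0pos hdvd) (hS i)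
    have hmul : S0 / S i * S i = S0 := Nat.div_mul_cancel hdvd
    have := period_mul (hS i) (p i) (hp i) (S0 / S i) hk m j (by rwa [hmul])
    rwa [hmul] at this
  refine ⟨T * S0, Nat.mul_pos hT hS0pos, fun l =>
    ((p (l % T) ((l / T) % S (l % T))).comp
      (C ((S0 / S (l % T) : ℕ) : ℤ) * X + C (((l / T) / S (l % T) : ℕ) : ℤ))), fun m l hl => ?_⟩
  have e1 : (T * S0 * m + l) % T = l % T := by
    have : T * S0 * m + l = T * (S0 * m) + l := by ring
    rw [this, Nat.mul_add_mod]
  have e2 : (T * S0 * m + l) / T = S0 * m + l / T := by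
    have : T * S0 * m + l = T * (S0 * m) + l := by ring
    rw [this, Nat.mul_add_div hT]
  simp only [e1, e2]
  exact key (l % T) (Nat.mod_lt _ hT) m (l / T)
    (Nat.div_lt_of_lt_mul hl)

lemma comp_linear (P : Polynomial ℤ) (T r : ℤ) :
    ∃ S : Polynomial ℤ, P.comp (C T * X + C r) = C (P.eval r) + C T * X * S := by
  induction P using Polynomial.induction_on with
  | C a => exact ⟨0, by simp⟩
  | add p q hp hq =>
    obtain ⟨S1, h1⟩ := hp
    obtain ⟨S2, h2⟩ := hq
    exact ⟨S1 + S2, by rw [add_comp, h1, h2]; simp; ring⟩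
  | monomial n a ih =>
    obtain ⟨S, hS⟩ := ih
    refine ⟨C (a * r ^ n) + S * (C T * X + C r), ?_⟩
    have : C a * X ^ (n + 1) = (C a * X ^ n) * X := by ring
    rw [this, mul_comp, hS, X_comp]
    simp [C_mul, pow_succ]
    ring

lemma denomClear (f : Polynomial ℚ) :
    ∃ (D : ℤ) (F : Polynomial ℤ), 0 < D ∧ F.map (Int.castRingHom ℚ) = C (D : ℚ) * f := by
  induction f using Polynomial.induction_on with
  | C a =>
    refine ⟨a.den, C a.num, by exact_mod_cast a.pos, ?_⟩
    rw [Polynomial.map_C]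
    rw [← C_mul]
    congr 1
    rw [eq_intCast]
    have := Rat.mul_den_eq_num a
    push_cast
    linear_combination -this
  | add p q hp hq =>
    obtain ⟨D1, F1, h1, e1⟩ := hp
    obtain ⟨D2, F2, h2, e2⟩ := hq
    refine ⟨D1 * D2, C D2 * F1 + C D1 * F2, mul_pos h1 h2, ?_⟩
    simp [Polynomial.map_add, Polynomial.map_mul, Polynomial.map_C, e1, e2]
    push_cast
    ring
  | monomial n a ih =>
    obtain ⟨D, F, hD, e⟩ := ih
    refine ⟨D, F * X, hD, ?_⟩
    rw [Polynomial.map_mul, Polynomial.map_X, e]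
    ring

lemma core (P Q A B : Polynomial ℤ) (N : ℤ) (hN : N ≠ 0) (h : P * A + Q * B = C N) :
    ∃ c u v : ℕ → ℤ, IsQuasiPoly c ∧ IsQuasiPoly u ∧ IsQuasiPoly v ∧
      (∀ n : ℕ, c n ∣ P.eval (n : ℤ) ∧ c n ∣ Q.eval (n : ℤ)) ∧
      (∀ n : ℕ, P.eval (n : ℤ) * u n + Q.eval (n : ℤ) * v n = c n) := by
  set T : ℕ := N.natAbs with hTdef
  have hT : 0 < T := Int.natAbs_pos.mpr hN
  have hNT : N ∣ (T : ℤ) := Int.dvd_natAbs.mpr dvd_rfl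
  obtain ⟨ε, hε1, hεN⟩ : ∃ ε : ℤ, (ε = 1 ∨ ε = -1) ∧ ε * N = (T : ℤ) := by
    rcases Int.natAbs_eq N with h' | h'
    · exact ⟨1, Or.inl rfl, by omega⟩
    · exact ⟨-1, Or.inr rfl, by omega⟩
  set c : ℕ → ℤ := fun n => (Int.gcd (P.eval (n : ℤ)) (Q.eval (n : ℤ)) : ℤ) with hcdef
  have evalN : ∀ x : ℤ, P.eval x * A.eval x + Q.eval x * B.eval x = N := by
    intro x
    have := congrArg (eval x) h
    simpa using this
  have gcd_dvd_N : ∀ x : ℤ, (Int.gcd (P.eval x) (Q.eval x) : ℤ) ∣ N := by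
    intro x
    rw [← evalN x]
    exact dvd_add ((Int.gcd_dvd_left _ _).mul_right _) ((Int.gcd_dvd_right _ _).mul_right _)
  -- congruence: value of c depends only on residue mod T
  have congr_key : ∀ m r : ℕ, c (T * m + r) = c r := by
    intro m r
    have hsub : (((T * m + r : ℕ) : ℤ) - (r : ℤ)) = (T : ℤ) * m := by push_cast; ring
    have hNd : ∀ R : Polynomial ℤ, N ∣ R.eval ((T * m + r : ℕ) : ℤ) - R.eval (r : ℤ) := by
      intro R
      refine dvd_trans ?_ (Polynomial.sub_dvd_eval_sub _ _ R)
      rw [hsub]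
      exact hNT.mul_right _
    have d1 : ∀ x y : ℕ, (∀ R : Polynomial ℤ, N ∣ R.eval (x:ℤ) - R.eval (y:ℤ)) →
        (Int.gcd (P.eval (x:ℤ)) (Q.eval (x:ℤ)) : ℤ) ∣ Int.gcd (P.eval (y:ℤ)) (Q.eval (y:ℤ)) := by
      intro x y hxy
      have hgN := gcd_dvd_N (x : ℤ)
      refine Int.dvd_coe_gcd ?_ ?_
      · have : P.eval (y:ℤ) = P.eval (x:ℤ) - (P.eval (x:ℤ) - P.eval (y:ℤ)) := by ring
        rw [this]
        exact dvd_sub (Int.gcd_dvd_left _ _) (hgN.trans (hxy P))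
      · have : Q.eval (y:ℤ) = Q.eval (x:ℤ) - (Q.eval (x:ℤ) - Q.eval (y:ℤ)) := by ring
        rw [this]
        exact dvd_sub (Int.gcd_dvd_right _ _) (hgN.trans (hxy Q))
    have h12 := d1 (T * m + r) r hNd
    have h21 := d1 r (T * m + r) (fun R => by
      have := (hNd R).neg_right
      rwa [neg_sub] at this)
    have := Nat.dvd_antisymm (Int.natCast_dvd_natCast.mp h12) (Int.natCast_dvd_natCast.mp h21)
    simp only [hcdef]
    exact_mod_cast this
  -- Bézout data per residue class
  set α : ℕ → ℤ := fun r => Int.gcdA (P.eval (r : ℤ)) (Q.eval (r : ℤ)) with hα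
  set β : ℕ → ℤ := fun r => Int.gcdB (P.eval (r : ℤ)) (Q.eval (r : ℤ)) with hβ
  have hab : ∀ r : ℕ, c r = P.eval (r : ℤ) * α r + Q.eval (r : ℤ) * β r := fun r =>
    Int.gcd_eq_gcd_ab _ _
  choose SP hSP using fun r : ℕ => comp_linear P (T : ℤ) (r : ℤ)
  choose SQ hSQ using fun r : ℕ => comp_linear Q (T : ℤ) (r : ℤ)
  set W : ℕ → Polynomial ℤ := fun r => X * (C (α r) * SP r + C (β r) * SQ r) with hW
  set U : ℕ → Polynomial ℤ := fun r =>
    C (α r) - C ε * W r * (A.comp (C (T : ℤ) * X + C (r : ℤ))) with hU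
  set V : ℕ → Polynomial ℤ := fun r =>
    C (β r) - C ε * W r * (B.comp (C (T : ℤ) * X + C (r : ℤ))) with hV
  have modeq : ∀ m i : ℕ, i < T → (T * m + i) % T = i ∧ (T * m + i) / T = m := by
    intro m i hi
    constructor
    · rw [Nat.mul_add_mod, Nat.mod_eq_of_lt hi]
    · rw [Nat.mul_add_div hT, Nat.div_eq_of_lt hi, Nat.add_zero]
  refine ⟨c, fun n => (U (n % T)).eval ((n / T : ℕ) : ℤ),
    fun n => (V (n % T)).eval ((n / T : ℕ) : ℤ),
    ⟨T, hT, fun i => C (c i), fun m i hi => by rw [eval_C]; exact congr_key m i⟩,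
    ⟨T, hT, U, fun m i hi => by simp only [(modeq m i hi).1, (modeq m i hi).2]⟩,
    ⟨T, hT, V, fun m i hi => by simp only [(modeq m i hi).1, (modeq m i hi).2]⟩,
    fun n => ⟨Int.gcd_dvd_left _ _, Int.gcd_dvd_right _ _⟩, ?_⟩
  intro n
  set r : ℕ := n % T with hr
  set m : ℕ := n / T with hm
  have hn : T * m + r = n := by rw [hr, hm]; exact Nat.div_add_mod n T
  rw [← hn]
  have hcn : c (T * m + r) = c r := congr_key m r
  simp only [hcn, (modeq m r (Nat.mod_lt n hT)).1, (modeq m r (Nat.mod_lt n hT)).2]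
  -- expand evaluations
  have hPx := congrArg (eval (m : ℤ)) (hSP r)
  have hQx := congrArg (eval (m : ℤ)) (hSQ r)
  rw [eval_comp] at hPx hQx
  simp only [eval_add, eval_mul, eval_C, eval_X] at hPx hQx
  have hE5 := evalN ((T : ℤ) * (m : ℤ) + (r : ℤ))
  have hE3 := hab r
  simp only [hU, hV, hW, eval_sub, eval_add, eval_mul, eval_C, eval_X, eval_comp]
  push_cast
  linear_combination (α r) * hPx + (β r) * hQx - hE3 -
    ((m : ℤ) * (α r * (SP r).eval (m : ℤ) + β r * (SQ r).eval (m : ℤ))) * hεN -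
    (ε * ((m : ℤ) * (α r * (SP r).eval (m : ℤ) + β r * (SQ r).eval (m : ℤ)))) * hE5

lemma polyPair (P Q : Polynomial ℤ) :
    ∃ d u v : ℕ → ℤ, IsQuasiPoly d ∧ IsQuasiPoly u ∧ IsQuasiPoly v ∧
      (∀ n : ℕ, d n ∣ P.eval (n : ℤ) ∧ d n ∣ Q.eval (n : ℤ)) ∧
      (∀ n : ℕ, P.eval (n : ℤ) * u n + Q.eval (n : ℤ) * v n = d n) := by
  classical
  by_cases h0 : P = 0 ∧ Q = 0
  · exact ⟨0, 0, 0, qp_const 0, qp_const 0, qp_const 0,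
      fun n => by simp [h0.1, h0.2], fun n => by simp [h0.1, h0.2]⟩
  have hinj : Function.Injective (Polynomial.map (Int.castRingHom ℚ)) :=
    Polynomial.map_injective _ Int.cast_injective
  set P' : Polynomial ℚ := P.map (Int.castRingHom ℚ) with hP'
  set Q' : Polynomial ℚ := Q.map (Int.castRingHom ℚ) with hQ'
  set G : Polynomial ℚ := EuclideanDomain.gcd P' Q' with hG
  set A' : Polynomial ℚ := EuclideanDomain.gcdA P' Q' with hA'
  set B' : Polynomial ℚ := EuclideanDomain.gcdB P' Q' with hB'
  have hGne : G ≠ 0 := by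
    intro hz
    rw [hG, EuclideanDomain.gcd_eq_zero_iff] at hz
    exact h0 ⟨hinj (by simpa [hP'] using hz.1), hinj (by simpa [hQ'] using hz.2)⟩
  obtain ⟨pt, hpt⟩ : G ∣ P' := EuclideanDomain.gcd_dvd_left P' Q'
  obtain ⟨qt, hqt⟩ : G ∣ Q' := EuclideanDomain.gcd_dvd_right P' Q'
  have hbez : pt * A' + qt * B' = 1 := by
    have hg : G = P' * A' + Q' * B' := EuclideanDomain.gcd_eq_gcd_ab P' Q'
    have key : G * (pt * A' + qt * B') = G * 1 := by
      rw [mul_add, ← mul_assoc, ← mul_assoc, ← hpt, ← hqt, mul_one, ← hg]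
    exact mul_left_cancel₀ hGne key
  obtain ⟨k, Gz, hk, hGz⟩ := denomClear G
  obtain ⟨E1, Pz, hE1, hPz⟩ := denomClear pt
  obtain ⟨E2, Qz, hE2, hQz⟩ := denomClear qt
  obtain ⟨Da, Az, hDa, hAz⟩ := denomClear A'
  obtain ⟨Db, Bz, hDb, hBz⟩ := denomClear B'
  have hD0pos : (0:ℤ) < k * E1 * E2 := by positivity
  have hNpos : (0:ℤ) < E1 * E2 * Da * Db := by positivity
  have hcast : ∀ a b c2 d2 : ℤ, ((a * b * c2 * d2 : ℤ) : ℚ) = (a:ℚ)*(b:ℚ)*(c2:ℚ)*(d2:ℚ) := by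
    intro a b c2 d2; push_cast; ring
  have h1 : Gz * (C E2 * Pz) = C (k * E1 * E2) * P := by
    apply hinj
    simp only [Polynomial.map_mul, Polynomial.map_C, hGz, hPz]
    rw [← hP', hpt]
    simp only [eq_intCast]
    rw [show ((k * E1 * E2 : ℤ) : ℚ) = (k:ℚ)*(E1:ℚ)*(E2:ℚ) by push_cast; ring]
    simp only [C_mul]
    ring
  have h2 : Gz * (C E1 * Qz) = C (k * E1 * E2) * Q := by
    apply hinj
    simp only [Polynomial.map_mul, Polynomial.map_C, hGz, hQz]
    rw [← hQ', hqt]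
    simp only [eq_intCast]
    rw [show ((k * E1 * E2 : ℤ) : ℚ) = (k:ℚ)*(E1:ℚ)*(E2:ℚ) by push_cast; ring]
    simp only [C_mul]
    ring
  have h3 : (C E2 * Pz) * (C Db * Az) + (C E1 * Qz) * (C Da * Bz) = C (E1 * E2 * Da * Db) := by
    apply hinj
    simp only [Polynomial.map_add, Polynomial.map_mul, Polynomial.map_C, hPz, hQz, hAz, hBz]
    simp only [eq_intCast]
    rw [show ((E1 * E2 * Da * Db : ℤ) : ℚ) = (E1:ℚ)*(E2:ℚ)*(Da:ℚ)*(Db:ℚ) by push_cast; ring]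
    simp only [C_mul]
    linear_combination (C (E1:ℚ) * C (E2:ℚ) * C (Da:ℚ) * C (Db:ℚ)) * hbez
  obtain ⟨c, u0, v0, hcq, huq, hvq, hdvd, hbz⟩ :=
    core (C E2 * Pz) (C E1 * Qz) (C Db * Az) (C Da * Bz) (E1 * E2 * Da * Db)
      (ne_of_gt hNpos) h3
  have e1 : ∀ n : ℕ, Gz.eval (n:ℤ) * (C E2 * Pz).eval (n:ℤ)
      = (k * E1 * E2) * P.eval (n:ℤ) := by
    intro n
    have := congrArg (eval (n:ℤ)) h1
    simpa using this
  have e2 : ∀ n : ℕ, Gz.eval (n:ℤ) * (C E1 * Qz).eval (n:ℤ)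
      = (k * E1 * E2) * Q.eval (n:ℤ) := by
    intro n
    have := congrArg (eval (n:ℤ)) h2
    simpa using this
  have key : ∀ n : ℕ, (k * E1 * E2) * (P.eval (n:ℤ) * u0 n + Q.eval (n:ℤ) * v0 n)
      = Gz.eval (n:ℤ) * c n := by
    intro n
    linear_combination (-(u0 n)) * e1 n - (v0 n) * e2 n + (Gz.eval (n:ℤ)) * hbz n
  refine ⟨fun n => P.eval (n:ℤ) * u0 n + Q.eval (n:ℤ) * v0 n, u0, v0,
    ((qp_eval P).mul huq).add ((qp_eval Q).mul hvq), huq, hvq, fun n => ?_, fun n => rfl⟩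
  obtain ⟨t1, ht1⟩ := (hdvd n).1
  obtain ⟨t2, ht2⟩ := (hdvd n).2
  constructor
  · refine ⟨t1, mul_left_cancel₀ (ne_of_gt hD0pos) ?_⟩
    show (k * E1 * E2) * P.eval (n:ℤ)
      = (k * E1 * E2) * ((P.eval (n:ℤ) * u0 n + Q.eval (n:ℤ) * v0 n) * t1)
    linear_combination -(e1 n) + (Gz.eval (n:ℤ)) * ht1 - t1 * key n
  · refine ⟨t2, mul_left_cancel₀ (ne_of_gt hD0pos) ?_⟩
    show (k * E1 * E2) * Q.eval (n:ℤ)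
      = (k * E1 * E2) * ((P.eval (n:ℤ) * u0 n + Q.eval (n:ℤ) * v0 n) * t2)
    linear_combination -(e2 n) + (Gz.eval (n:ℤ)) * ht2 - t2 * key n

lemma qpPair {a b : ℕ → ℤ} (ha : IsQuasiPoly a) (hb : IsQuasiPoly b) :
    ∃ d u v : ℕ → ℤ, IsQuasiPoly d ∧ IsQuasiPoly u ∧ IsQuasiPoly v ∧
      (∀ n : ℕ, d n ∣ a n) ∧ (∀ n : ℕ, d n ∣ b n) ∧
      (∀ n : ℕ, a n * u n + b n * v n = d n) := by
  obtain ⟨Ta, hTa, pa, hpa⟩ := ha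
  obtain ⟨Tb, hTb, pb, hpb⟩ := hb
  set T : ℕ := Tb * Ta with hTdef
  have hT : 0 < T := Nat.mul_pos hTb hTa
  have hpa' := period_mul hTa pa hpa Tb hTb
  have hpb' := period_mul hTb pb hpb Ta hTa
  set PA : ℕ → Polynomial ℤ := fun i => (pa (i % Ta)).comp (C (Tb : ℤ) * X + C ((i / Ta : ℕ) : ℤ))
    with hPA
  set PB : ℕ → Polynomial ℤ := fun i => (pb (i % Tb)).comp (C (Ta : ℤ) * X + C ((i / Tb : ℕ) : ℤ))
    with hPB
  have hA : ∀ m i : ℕ, i < T → a (T * m + i) = (PA i).eval (m : ℤ) := fun m i hi =>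
    hpa' m i hi
  have hB : ∀ m i : ℕ, i < T → b (T * m + i) = (PB i).eval (m : ℤ) := by
    intro m i hi
    have := hpb' m i (by rwa [hTdef, Nat.mul_comm Tb Ta] at hi)
    rwa [Nat.mul_comm Ta Tb, ← hTdef] at this
  have hchoice : ∀ i : ℕ, ∃ duv : (ℕ → ℤ) × (ℕ → ℤ) × (ℕ → ℤ),
      IsQuasiPoly duv.1 ∧ IsQuasiPoly duv.2.1 ∧ IsQuasiPoly duv.2.2 ∧
      (∀ m : ℕ, duv.1 m ∣ (PA i).eval (m : ℤ) ∧ duv.1 m ∣ (PB i).eval (m : ℤ)) ∧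
      (∀ m : ℕ, (PA i).eval (m : ℤ) * duv.2.1 m + (PB i).eval (m : ℤ) * duv.2.2 m = duv.1 m) := by
    intro i
    obtain ⟨d, u, v, h1, h2, h3, h4, h5⟩ := polyPair (PA i) (PB i)
    exact ⟨(d, u, v), h1, h2, h3, h4, h5⟩
  choose duv hd hu hv hdvd hbez using hchoice
  have ea : ∀ n : ℕ, a n = (PA (n % T)).eval ((n / T : ℕ) : ℤ) := by
    intro n
    have e := hA (n / T) (n % T) (Nat.mod_lt n hT)
    rwa [Nat.div_add_mod n T] at e
  have eb : ∀ n : ℕ, b n = (PB (n % T)).eval ((n / T : ℕ) : ℤ) := by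
    intro n
    have e := hB (n / T) (n % T) (Nat.mod_lt n hT)
    rwa [Nat.div_add_mod n T] at e
  refine ⟨fun n => (duv (n % T)).1 (n / T), fun n => (duv (n % T)).2.1 (n / T),
    fun n => (duv (n % T)).2.2 (n / T),
    qp_glue T hT _ (fun i => hd i), qp_glue T hT _ (fun i => hu i), qp_glue T hT _ (fun i => hv i),
    fun n => ?_, fun n => ?_, fun n => ?_⟩
  · rw [ea n]
    exact (hdvd (n % T) (n / T)).1
  · rw [eb n]
    exact (hdvd (n % T) (n / T)).2
  · rw [ea n, eb n]
    exact hbez (n % T) (n / T)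

theorem generalized_gcd_bezout (s : ℕ) (f : Fin s → (ℕ → ℤ))
    (hf : ∀ k, IsQuasiPoly (f k)) :
    ∃ (d : ℕ → ℤ) (u : Fin s → (ℕ → ℤ)),
      IsQuasiPoly d ∧ (∀ k, IsQuasiPoly (u k)) ∧
      (∀ k, ∀ n : ℕ, d n ∣ f k n) ∧
      (∀ p : ℕ → ℤ, IsQuasiPoly p → (∀ k, ∀ n : ℕ, p n ∣ f k n) → ∀ n : ℕ, p n ∣ d n) ∧
      (∀ n : ℕ, ∑ k, f k n * u k n = d n) := by
  induction s with
  | zero =>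
    exact ⟨fun _ => 0, fun k => 0, qp_const 0, fun k => k.elim0, fun k => k.elim0,
      fun p _ _ n => dvd_zero _, fun n => by simp⟩
  | succ s ih =>
    obtain ⟨d', u', hd'q, hu'q, hdvd', hgrt', hsum'⟩ :=
      ih (fun k => f k.castSucc) (fun k => hf k.castSucc)
    obtain ⟨d, w1, w2, hdq, hw1q, hw2q, hdd', hdlast, hbez⟩ :=
      qpPair hd'q (hf (Fin.last s))
    refine ⟨d, Fin.lastCases w2 (fun k n => u' k n * w1 n), hdq, ?_, ?_, ?_, ?_⟩
    · intro k
      refine Fin.lastCases ?_ (fun k => ?_) k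
      · simpa using hw2q
      · simpa using (hu'q k).mul hw1q
    · intro k n
      refine Fin.lastCases ?_ (fun k => ?_) k
      · exact hdlast n
      · exact (hdd' n).trans (hdvd' k n)
    · intro p hp hpf n
      have h1 : p n ∣ d' n := hgrt' p hp (fun k => hpf k.castSucc) n
      have h2 : p n ∣ f (Fin.last s) n := hpf (Fin.last s) n
      rw [← hbez n]
      exact dvd_add ((h1.mul_right _)) ((h2.mul_right _))
    · intro n
      rw [Fin.sum_univ_castSucc]
      simp only [Fin.lastCases_castSucc, Fin.lastCases_last]
      have : ∑ k : Fin s, f k.castSucc n * (u' k n * w1 n)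
          = (∑ k : Fin s, f k.castSucc n * u' k n) * w1 n := by
        rw [Finset.sum_mul]
        exact Finset.sum_congr rfl (fun k _ => by ring)
      rw [this, hsum' n, hbez n]
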